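/- Gautschi-type bound on a Beta function ratio: for real d₁ > 0 and d₂ > 1, B(d₁ + 1/2, d₂ - 1/2) / B(d₁, d₂) ≤ sqrt((d₁ + 1/2)/(d₂ - 1)), where B is the Beta function. -/
import Mathlib

lemma gamma_half_sq (x : ℝ) (hx : 0 < x) :
    Real.Gamma (x + 1/2) ^ 2 ≤ x * Real.Gamma x ^ 2 := by
  have hx1 : (0:ℝ) < x + 1 := by linarith
  have hmid : Real.log (Real.Gamma (x + 1/2)) ≤
      (1/2) * Real.log (Real.Gamma x) + (1/2) * Real.log (Real.Gamma (x+1)) := by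
    have h0 := Real.convexOn_log_Gamma.2 (Set.mem_Ioi.2 hx) (Set.mem_Ioi.2 hx1)
      (by norm_num : (0:ℝ) ≤ 1/2) (by norm_num : (0:ℝ) ≤ 1/2) (by norm_num)
    simp only [smul_eq_mul, Function.comp_apply] at h0
    rw [show (1/2:ℝ) * x + 1/2 * (x+1) = x + 1/2 from by ring] at h0
    exact h0
  have hg : 0 < Real.Gamma x := Real.Gamma_pos_of_pos hx
  have hg1 : 0 < Real.Gamma (x+1) := Real.Gamma_pos_of_pos hx1
  have hgh : 0 < Real.Gamma (x + 1/2) := Real.Gamma_pos_of_pos (by linarith)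
  have h2 : Real.log (Real.Gamma (x + 1/2) ^ 2) ≤ Real.log (Real.Gamma x * Real.Gamma (x+1)) := by
    rw [Real.log_pow, Real.log_mul (ne_of_gt hg) (ne_of_gt hg1)]
    push_cast
    linarith
  have h3 : Real.Gamma (x + 1/2) ^ 2 ≤ Real.Gamma x * Real.Gamma (x+1) :=
    (Real.log_le_log_iff (by positivity) (by positivity)).mp h2
  calc Real.Gamma (x + 1/2) ^ 2 ≤ Real.Gamma x * Real.Gamma (x+1) := h3
    _ = x * Real.Gamma x ^ 2 := by rw [Real.Gamma_add_one (ne_of_gt hx)]; ring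

/-- Gautschi-type bound on a Beta function ratio: for `d₁ > 0` and `d₂ > 1`,
`B(d₁ + 1/2, d₂ - 1/2) / B(d₁, d₂) ≤ sqrt((d₁ + 1/2)/(d₂ - 1))`, where
`B(x,y) = Γ(x)Γ(y)/Γ(x+y)`. -/
theorem beta_ratio_gautschi_bound
    (d₁ d₂ : ℝ) (h₁ : 0 < d₁) (h₂ : 1 < d₂)
    (B : ℝ → ℝ → ℝ)
    (hB : ∀ x y : ℝ, B x y = Real.Gamma x * Real.Gamma y / Real.Gamma (x + y)) :
    B (d₁ + 1 / 2) (d₂ - 1 / 2) / B d₁ d₂ ≤ Real.sqrt ((d₁ + 1 / 2) / (d₂ - 1)) := by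
  have hd2 : (0:ℝ) < d₂ - 1 := by linarith
  have hg1 : 0 < Real.Gamma d₁ := Real.Gamma_pos_of_pos h₁
  have hg2 : 0 < Real.Gamma d₂ := Real.Gamma_pos_of_pos (by linarith)
  have hg1h : 0 < Real.Gamma (d₁ + 1/2) := Real.Gamma_pos_of_pos (by linarith)
  have hg2h : 0 < Real.Gamma (d₂ - 1/2) := Real.Gamma_pos_of_pos (by linarith)
  have hB2 : Real.Gamma (d₂ - 1/2) ^ 2 ≤ Real.Gamma d₂ ^ 2 / (d₂ - 1) := by
    have h := gamma_half_sq (d₂ - 1) hd2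
    rw [show d₂ - 1 + 1/2 = d₂ - 1/2 from by ring] at h
    have hG : Real.Gamma d₂ = (d₂ - 1) * Real.Gamma (d₂ - 1) := by
      have h' := Real.Gamma_add_one (ne_of_gt hd2)
      rw [show d₂ - 1 + 1 = d₂ from by ring] at h'
      linarith
    rw [hG, le_div_iff₀ hd2]
    nlinarith [sq_nonneg (Real.Gamma (d₂ - 1))]
  have hA2 := gamma_half_sq d₁ h₁
  have hratio : B (d₁ + 1 / 2) (d₂ - 1 / 2) / B d₁ d₂
      = (Real.Gamma (d₁ + 1/2) * Real.Gamma (d₂ - 1/2)) / (Real.Gamma d₁ * Real.Gamma d₂) := by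
    rw [hB, hB, show d₁ + 1/2 + (d₂ - 1/2) = d₁ + d₂ by ring]
    have hgs : 0 < Real.Gamma (d₁ + d₂) := Real.Gamma_pos_of_pos (by linarith)
    field_simp
  rw [hratio, div_le_iff₀ (by positivity)]
  have hsq : (Real.Gamma (d₁ + 1/2) * Real.Gamma (d₂ - 1/2)) ^ 2
      ≤ (Real.sqrt ((d₁ + 1 / 2) / (d₂ - 1)) * (Real.Gamma d₁ * Real.Gamma d₂)) ^ 2 := by
    have hs : Real.sqrt ((d₁ + 1 / 2) / (d₂ - 1)) ^ 2 = (d₁ + 1/2) / (d₂ - 1) :=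
      Real.sq_sqrt (by positivity)
    conv_rhs => rw [mul_pow, hs]
    have key : Real.Gamma (d₁ + 1/2) ^ 2 * Real.Gamma (d₂ - 1/2) ^ 2
        ≤ (d₁ * Real.Gamma d₁ ^ 2) * (Real.Gamma d₂ ^ 2 / (d₂ - 1)) :=
      mul_le_mul hA2 hB2 (by positivity) (by positivity)
    calc (Real.Gamma (d₁ + 1/2) * Real.Gamma (d₂ - 1/2)) ^ 2
        = Real.Gamma (d₁ + 1/2) ^ 2 * Real.Gamma (d₂ - 1/2) ^ 2 := by ring
      _ ≤ (d₁ * Real.Gamma d₁ ^ 2) * (Real.Gamma d₂ ^ 2 / (d₂ - 1)) := key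
      _ = (d₁ * Real.Gamma d₁ ^ 2 * Real.Gamma d₂ ^ 2) / (d₂ - 1) := by ring
      _ ≤ ((d₁ + 1/2) * (Real.Gamma d₁ * Real.Gamma d₂) ^ 2) / (d₂ - 1) := by
          gcongr ?_ / _
          nlinarith [sq_nonneg (Real.Gamma d₁ * Real.Gamma d₂)]
      _ = (d₁ + 1/2) / (d₂ - 1) * (Real.Gamma d₁ * Real.Gamma d₂) ^ 2 := by ring
  exact (pow_le_pow_iff_left₀ (by positivity) (by positivity) two_ne_zero).mp hsq
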